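/- For an R-312-avoiding R-permutation π, the minimum-length 312-avoiding permutation σ lifting π (i.e., with R-projection equal to π) satisfies Δ_R(Ψ(σ)) = Ψ_R(π), where Ψ is the full rank-tuple map (case R = [n−1]) and Ψ_R is the rank R-tuple map. -/

import Mathlib

def IsUpperTuple (n : ℕ) (ν : Fin n → ℕ) : Prop :=
  ∀ i : Fin n, i.val + 1 ≤ ν i ∧ ν i ≤ n

def IsRIncr (n : ℕ) (R : Finset ℕ) (ν : Fin n → ℕ) : Prop :=
  ∀ i j : Fin n, j.val = i.val + 1 → (i.val + 1) ∉ R → ν i < ν j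

def IsRIncrUpper (n : ℕ) (R : Finset ℕ) (ν : Fin n → ℕ) : Prop :=
  IsUpperTuple n ν ∧ IsRIncr n R ν

def IsRPerm (n : ℕ) (R : Finset ℕ) (π : Equiv.Perm (Fin n)) : Prop :=
  ∀ i j : Fin n, j.val = i.val + 1 → (i.val + 1) ∉ R → π i < π j

def Avoids312 (n : ℕ) (π : Equiv.Perm (Fin n)) : Prop :=
  ¬ ∃ a b c : Fin n, a < b ∧ b < c ∧ π b < π a ∧ π b < π c ∧ π c < π a

def RAvoids312 (n : ℕ) (R : Finset ℕ) (π : Equiv.Perm (Fin n)) : Prop :=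
  ¬ ∃ a b c : Fin n, a < b ∧ b < c ∧
      (∃ q ∈ R, a.val + 1 ≤ q ∧ q ≤ b.val) ∧
      (∃ q ∈ R, b.val + 1 ≤ q ∧ q ≤ c.val) ∧
      π b < π a ∧ π b < π c ∧ π c < π a

def carrelEnd (n : ℕ) (R : Finset ℕ) (i : Fin n) : ℕ :=
  ((insert n R).filter (fun q => i.val + 1 ≤ q)).min'
    ⟨n, Finset.mem_filter.mpr ⟨Finset.mem_insert_self n R, i.isLt⟩⟩

def SameCarrel {n : ℕ} (R : Finset ℕ) (i j : Fin n) : Prop :=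
  ∀ q ∈ R, ¬(i.val + 1 ≤ q ∧ q ≤ j.val)

def IsCritical (n : ℕ) (R : Finset ℕ) (ν : Fin n → ℕ) (i : Fin n) : Prop :=
  ∀ j : Fin n, i < j → SameCarrel R i j → ν i + j.val < ν j + i.val

open Classical in
noncomputable def coreMap (n : ℕ) (R : Finset ℕ) (ν : Fin n → ℕ) (i : Fin n) : ℕ :=
  let s : Finset (Fin n) :=
    Finset.univ.filter (fun x => i ≤ x ∧ SameCarrel R i x ∧ IsCritical n R ν x)
  if h : s.Nonempty then ν (s.min' h) - ((s.min' h).val - i.val) else 0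

def critList (n : ℕ) (R : Finset ℕ) (ν : Fin n → ℕ) : Set (Fin n × ℕ) :=
  {p | IsCritical n R ν p.1 ∧ p.2 = ν p.1}

def rankTuple (n : ℕ) (R : Finset ℕ) (π : Equiv.Perm (Fin n)) (i : Fin n) : ℕ :=
  (((Finset.univ.filter (fun j : Fin n => j.val < carrelEnd n R i)).image
      (fun j => (π j).val + 1)).sort (· ≤ ·)).getD i.val 0

def GaplessCond (n : ℕ) (R : Finset ℕ) (γ : Fin n → ℕ) : Prop :=
  ∀ q : ℕ, q ∈ R → ∀ (_ : 0 < q) (h2 : q < n),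
    γ ⟨q, h2⟩ < γ ⟨q - 1, by omega⟩ →
      (q + (γ ⟨q - 1, by omega⟩ - γ ⟨q, h2⟩ + 1) ≤ carrelEnd n R ⟨q, h2⟩ ∧
        ∀ t : ℕ, t < γ ⟨q - 1, by omega⟩ - γ ⟨q, h2⟩ + 1 → ∀ (ht : q + t < n),
          γ ⟨q + t, ht⟩ =
            γ ⟨q - 1, by omega⟩ - (γ ⟨q - 1, by omega⟩ - γ ⟨q, h2⟩ + 1) + 1 + t)

def IsRProj (n : ℕ) (R : Finset ℕ) (σ π : Equiv.Perm (Fin n)) : Prop :=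
  IsRPerm n R π ∧ ∀ q ∈ R,
    (Finset.univ.filter (fun j : Fin n => j.val < q)).image (fun j => σ j) =
    (Finset.univ.filter (fun j : Fin n => j.val < q)).image (fun j => π j)

/-- The full rank tuple Ψ(σ): its i-th entry is max{σ_1, ..., σ_i} (1-based values). -/
def psiFull (n : ℕ) (σ : Equiv.Perm (Fin n)) (i : Fin n) : ℕ :=
  (Finset.univ.filter (fun j : Fin n => j ≤ i)).sup (fun j => (σ j).val + 1)

/-- The Coxeter length (number of inversions) of a permutation. -/
def invCount (n : ℕ) (σ : Equiv.Perm (Fin n)) : ℕ :=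
  (Finset.univ.filter (fun p : Fin n × Fin n => p.1 < p.2 ∧ σ p.2 < σ p.1)).card

lemma auxCard (n m : ℕ) (h : m ≤ n) :
    (Finset.univ.filter (fun j : Fin n => j.val < m)).card = m := by
  apply Finset.card_eq_of_bijective (fun k hk => (⟨k, lt_of_lt_of_le hk h⟩ : Fin n))
  · intro a ha
    simp only [Finset.mem_filter] at ha
    exact ⟨a.val, ha.2, rfl⟩
  · intro k hk; simp [hk]
  · intro k j hk hj hkj
    simpa [Fin.ext_iff] using hkj

-- main combinatorial lemma
theorem keyLemma (n : ℕ) (R : Finset ℕ) (_hR : R ⊆ Finset.Ico 1 n)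
    (σ : Equiv.Perm (Fin n)) (hσ : Avoids312 n σ) (i : Fin n)
    (q : ℕ) (hq : q = carrelEnd n R i)
    (V : Finset ℕ)
    (hV : V = (Finset.univ.filter (fun j : Fin n => j.val < q)).image
      (fun j => (σ j).val + 1))
    (r : ℕ) (hr_mem : r ∈ V)
    (hr_count : (V.filter (fun w => w < r)).card = i.val) :
    coreMap n R (psiFull n σ) i = r := by
  classical
  set ν := psiFull n σ with hν
  -- basic facts about q
  have hmem0 : (carrelEnd n R i) ∈ insert n R ∧ i.val + 1 ≤ carrelEnd n R i := by
    have := Finset.min'_mem ((insert n R).filter (fun q => i.val + 1 ≤ q))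
      ⟨n, Finset.mem_filter.mpr ⟨Finset.mem_insert_self n R, i.isLt⟩⟩
    rw [Finset.mem_filter] at this
    exact this
  have hiq : i.val < q := by omega
  have hqn : q ≤ n := by
    have : carrelEnd n R i ≤ n := Finset.min'_le _ n
      (Finset.mem_filter.mpr ⟨Finset.mem_insert_self n R, i.isLt⟩)
    omega
  have hqmin : ∀ p ∈ R, i.val < p → q ≤ p := by
    intro p hp hip
    have : carrelEnd n R i ≤ p := Finset.min'_le _ p
      (Finset.mem_filter.mpr ⟨Finset.mem_insert_of_mem hp, by omega⟩)
    omega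
  -- same-carrel characterization
  have hSC : ∀ a b : Fin n, i.val ≤ a.val → a.val < q → a ≤ b →
      (SameCarrel R a b ↔ b.val < q) := by
    intro a b hia haq hab
    constructor
    · intro hsc
      by_contra hbq
      push_neg at hbq
      rcases (Finset.mem_insert.mp hmem0.1).symm with hqR | hqn'
      · exact hsc q (by rwa [← hq] at hqR) ⟨by omega, by omega⟩
      · have := b.isLt; omega
    · intro hbq p hp ⟨h1, h2⟩
      have := hqmin p hp (by omega)
      omega
  -- facts about ν
  have hν_ge : ∀ k a : Fin n, a ≤ k → (σ a).val + 1 ≤ ν k := by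
    intro k a hak
    exact Finset.le_sup (f := fun j => (σ j).val + 1) (Finset.mem_filter.mpr ⟨Finset.mem_univ a, hak⟩)
  have hν_ub : ∀ k : Fin n, ν k ≤ n := by
    intro k
    apply Finset.sup_le
    intro a _
    exact (σ a).isLt
  have hν_mono : ∀ k l : Fin n, k ≤ l → ν k ≤ ν l := by
    intro k l hkl
    apply Finset.sup_mono
    intro a ha
    simp only [Finset.mem_filter] at ha ⊢
    exact ⟨ha.1, le_trans ha.2 hkl⟩
  have hν_att : ∀ k : Fin n, ∃ a : Fin n, a ≤ k ∧ (σ a).val + 1 = ν k := by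
    intro k
    obtain ⟨a, ha, hae⟩ := Finset.exists_mem_eq_sup
      (Finset.univ.filter (fun j : Fin n => j ≤ k))
      ⟨k, Finset.mem_filter.mpr ⟨Finset.mem_univ k, le_refl k⟩⟩
      (fun j => (σ j).val + 1)
    exact ⟨a, (Finset.mem_filter.mp ha).2, hae.symm⟩
  -- injectivity
  have hfinj : Function.Injective (fun j : Fin n => (σ j).val + 1) := by
    intro a b hab
    simp only at hab
    exact σ.injective (Fin.ext (by omega))
  -- cardinality of V
  have hVcard : V.card = q := by
    rw [hV, Finset.card_image_of_injective _ hfinj, auxCard n q hqn]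
  have hiVc : i.val < V.card := by omega
  -- prefix sets A k
  have hAcard : ∀ k : Fin n,
      ((Finset.univ.filter (fun j : Fin n => j ≤ k)).image (fun j => (σ j).val + 1)).card
        = k.val + 1 := by
    intro k
    rw [Finset.card_image_of_injective _ hfinj]
    have : (Finset.univ.filter (fun j : Fin n => j ≤ k))
        = (Finset.univ.filter (fun j : Fin n => j.val < k.val + 1)) := by
      apply Finset.filter_congr
      intro j _
      rw [Fin.le_def]
      omega
    rw [this, auxCard n (k.val+1) k.isLt]
  have hAsub : ∀ k : Fin n, k.val < q →
      ((Finset.univ.filter (fun j : Fin n => j ≤ k)).image (fun j => (σ j).val + 1)) ⊆ V := by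
    intro k hkq
    rw [hV]
    apply Finset.image_subset_image
    intro j hj
    simp only [Finset.mem_filter, Fin.le_def] at hj ⊢
    exact ⟨hj.1, by omega⟩
  have hAle : ∀ (k : Fin n) (w : ℕ),
      w ∈ ((Finset.univ.filter (fun j : Fin n => j ≤ k)).image (fun j => (σ j).val + 1)) →
      w ≤ ν k := by
    intro k w hw
    obtain ⟨j, hj, rfl⟩ := Finset.mem_image.mp hw
    exact hν_ge k j (Finset.mem_filter.mp hj).2
  -- filter (≤ r) of V has card i+1
  have hVr : (V.filter (fun w => w ≤ r)).card = i.val + 1 := by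
    have hins : V.filter (fun w => w ≤ r) = insert r (V.filter (fun w => w < r)) := by
      ext w
      simp only [Finset.mem_filter, Finset.mem_insert]
      constructor
      · rintro ⟨hwV, hwr⟩
        rcases Nat.lt_or_ge w r with h | h
        · exact Or.inr ⟨hwV, h⟩
        · exact Or.inl (by omega)
      · rintro (rfl | ⟨hwV, hwr⟩)
        · exact ⟨hr_mem, le_refl _⟩
        · exact ⟨hwV, by omega⟩
    rw [hins, Finset.card_insert_of_notMem (by simp), hr_count]
  -- r ≤ ν i
  have hrνi : r ≤ ν i := by
    by_contra hcon
    push_neg at hcon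
    have hsub : ((Finset.univ.filter (fun j : Fin n => j ≤ i)).image (fun j => (σ j).val + 1))
        ⊆ V.filter (fun w => w < r) := by
      intro w hw
      exact Finset.mem_filter.mpr ⟨hAsub i hiq hw, lt_of_le_of_lt (hAle i w hw) hcon⟩
    have := Finset.card_le_card hsub
    rw [hAcard i, hr_count] at this
    omega
  -- Step 1: lower bound
  have hstep1 : ∀ k : Fin n, i ≤ k → k.val < q → r + (k.val - i.val) ≤ ν k := by
    intro k hik hkq
    have hrνk : r ≤ ν k := le_trans hrνi (hν_mono i k hik)
    have hsub : ((Finset.univ.filter (fun j : Fin n => j ≤ k)).image (fun j => (σ j).val + 1))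
        ⊆ (V.filter (fun w => w ≤ r)) ∪ Finset.Ioc r (ν k) := by
      intro w hw
      rcases Nat.lt_or_ge r w with h | h
      · exact Finset.mem_union_right _ (Finset.mem_Ioc.mpr ⟨h, hAle k w hw⟩)
      · exact Finset.mem_union_left _ (Finset.mem_filter.mpr ⟨hAsub k hkq hw, h⟩)
    have hcle := Finset.card_le_card hsub
    have hcu := Finset.card_union_le (V.filter (fun w => w ≤ r)) (Finset.Ioc r (ν k))
    rw [hAcard k] at hcle
    rw [hVr] at hcu
    rw [Nat.card_Ioc] at hcu
    have hik' : i.val ≤ k.val := hik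
    omega
  -- the set P of positions < q with value ≤ r
  set P : Finset (Fin n) :=
    Finset.univ.filter (fun j : Fin n => j.val < q ∧ (σ j).val + 1 ≤ r) with hP
  have hPimg : P.image (fun j => (σ j).val + 1) = V.filter (fun w => w ≤ r) := by
    ext w
    simp only [hP, Finset.mem_image, Finset.mem_filter, Finset.mem_univ, true_and]
    constructor
    · rintro ⟨j, ⟨hjq, hjr⟩, rfl⟩
      refine ⟨?_, hjr⟩
      rw [hV]
      exact Finset.mem_image.mpr ⟨j, Finset.mem_filter.mpr ⟨Finset.mem_univ j, hjq⟩, rfl⟩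
    · rintro ⟨hwV, hwr⟩
      rw [hV] at hwV
      obtain ⟨j, hj, rfl⟩ := Finset.mem_image.mp hwV
      exact ⟨j, ⟨(Finset.mem_filter.mp hj).2, hwr⟩, rfl⟩
  have hPcard : P.card = i.val + 1 := by
    rw [← hVr, ← hPimg, Finset.card_image_of_injective _ hfinj]
  have hPne : P.Nonempty := Finset.card_pos.mp (by omega)
  set p : Fin n := P.max' hPne with hp
  have hpmem : p.val < q ∧ (σ p).val + 1 ≤ r :=
    (Finset.mem_filter.mp (P.max'_mem hPne)).2
  have hlast : ∀ j : Fin n, j.val < q → (σ j).val + 1 ≤ r → j ≤ p := by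
    intro j h1 h2
    exact P.le_max' j (Finset.mem_filter.mpr ⟨Finset.mem_univ j, h1, h2⟩)
  have hip : i ≤ p := by
    have hsub : P ⊆ Finset.univ.filter (fun j : Fin n => j.val < p.val + 1) := by
      intro j hj
      have h2 : j.val ≤ p.val := P.le_max' j hj
      simp only [Finset.mem_filter, Finset.mem_univ, true_and]
      omega
    have := Finset.card_le_card hsub
    rw [hPcard, auxCard n (p.val+1) p.isLt] at this
    exact Fin.le_def.mpr (by omega)
  -- Step 2a: ν p ≤ r + (p - i), using 312-avoidance
  have hνple : ν p ≤ r + (p.val - i.val) := by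
    by_contra hgt
    push_neg at hgt
    set A : Finset ℕ :=
      (Finset.univ.filter (fun j : Fin n => j ≤ p)).image (fun j => (σ j).val + 1) with hA
    have hAeq : A.filter (fun w => w ≤ r) = V.filter (fun w => w ≤ r) := by
      apply Finset.Subset.antisymm
      · intro w hw
        rw [Finset.mem_filter] at hw
        exact Finset.mem_filter.mpr ⟨hAsub p hpmem.1 hw.1, hw.2⟩
      · intro w hw
        rw [← hPimg] at hw
        obtain ⟨j, hj, rfl⟩ := Finset.mem_image.mp hw
        rw [hP, Finset.mem_filter] at hj
        refine Finset.mem_filter.mpr ⟨?_, hj.2.2⟩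
        rw [hA]
        refine Finset.mem_image.mpr ⟨j, Finset.mem_filter.mpr ⟨Finset.mem_univ j, ?_⟩, rfl⟩
        exact hlast j hj.2.1 hj.2.2
    have hAgt : (A.filter (fun w => ¬ w ≤ r)).card = p.val - i.val := by
      have h1 := Finset.card_filter_add_card_filter_not (s := A) (p := fun w => w ≤ r)
      rw [hAeq, hVr] at h1
      have h2 : A.card = p.val + 1 := hAcard p
      have h3 : i.val ≤ p.val := hip
      omega
    have hAgtsub : (A.filter (fun w => ¬ w ≤ r)) ⊆ Finset.Ioc r (ν p) := by
      intro w hw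
      rw [Finset.mem_filter] at hw
      exact Finset.mem_Ioc.mpr ⟨by omega, hAle p w hw.1⟩
    -- find a gap value v
    have hlt : (A.filter (fun w => ¬ w ≤ r)).card < (Finset.Ioc r (ν p)).card := by
      rw [hAgt, Nat.card_Ioc]
      have : i.val ≤ p.val := hip
      omega
    have hnot : ¬ (Finset.Ioc r (ν p)) ⊆ (A.filter (fun w => ¬ w ≤ r)) := by
      intro hcon
      have := Finset.card_le_card hcon
      omega
    obtain ⟨v, hvIoc, hvA⟩ := Finset.not_subset.mp hnot
    rw [Finset.mem_Ioc] at hvIoc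
    have hvnA : v ∉ A := by
      intro hcon
      exact hvA (Finset.mem_filter.mpr ⟨hcon, by omega⟩)
    -- v < ν p
    obtain ⟨a, hap, haν⟩ := hν_att p
    have hvlt : v < ν p := by
      rcases Nat.lt_or_ge v (ν p) with h | h
      · exact h
      · exfalso
        have : v = ν p := by omega
        apply hvnA
        rw [hA, this, ← haν]
        exact Finset.mem_image.mpr ⟨a, Finset.mem_filter.mpr ⟨Finset.mem_univ a, hap⟩, rfl⟩
    -- position c of value v - 1
    have hv1 : v - 1 < n := by
      have := hν_ub p
      omega
    set c : Fin n := σ.symm ⟨v - 1, hv1⟩ with hc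
    have hσc : (σ c).val + 1 = v := by
      rw [hc, Equiv.apply_symm_apply]
      simp only []
      omega
    have hcp : p < c := by
      rcases Fin.lt_or_le p c with h | h
      · exact h
      · exfalso
        apply hvnA
        rw [hA, ← hσc]
        exact Finset.mem_image.mpr ⟨c, Finset.mem_filter.mpr ⟨Finset.mem_univ c, h⟩, rfl⟩
    have hap' : a < p := by
      rcases Fin.lt_or_le a p with h | h
      · exact h
      · have : a = p := le_antisymm hap h
        rw [this] at haν
        omega
    -- 312 pattern (a, p, c)
    apply hσ
    refine ⟨a, p, c, hap', hcp, ?_, ?_, ?_⟩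
    · rw [Fin.lt_def]; omega
    · rw [Fin.lt_def]; omega
    · rw [Fin.lt_def]; omega
  have hνpeq : ν p = r + (p.val - i.val) :=
    le_antisymm hνple (hstep1 p hip hpmem.1)
  -- the set E of "tight" positions
  set E : Finset (Fin n) :=
    Finset.univ.filter (fun k : Fin n => i ≤ k ∧ k.val < q ∧ ν k = r + (k.val - i.val)) with hE
  have hpE : p ∈ E := Finset.mem_filter.mpr ⟨Finset.mem_univ p, hip, hpmem.1, hνpeq⟩
  have hEne : E.Nonempty := ⟨p, hpE⟩
  set x₀ : Fin n := E.max' hEne with hx₀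
  have hx₀mem : i ≤ x₀ ∧ x₀.val < q ∧ ν x₀ = r + (x₀.val - i.val) :=
    (Finset.mem_filter.mp (E.max'_mem hEne)).2
  have hEle : ∀ k : Fin n, i ≤ k → k.val < q → ν k = r + (k.val - i.val) → k ≤ x₀ := by
    intro k h1 h2 h3
    exact E.le_max' k (Finset.mem_filter.mpr ⟨Finset.mem_univ k, h1, h2, h3⟩)
  -- x₀ is critical
  have hcrit : IsCritical n R ν x₀ := by
    intro j hj hscj
    have hij : i ≤ j := le_trans hx₀mem.1 (le_of_lt hj)
    have hjq : j.val < q := (hSC x₀ j hx₀mem.1 hx₀mem.2.1 (le_of_lt hj)).mp hscj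
    have h1 := hstep1 j hij hjq
    have h2 : ν j ≠ r + (j.val - i.val) := by
      intro hcon
      have := hEle j hij hjq hcon
      exact absurd hj (not_lt.mpr this)
    have hii : i.val ≤ x₀.val := hx₀mem.1
    have hxj : x₀.val < j.val := hj
    have hx0e := hx₀mem.2.2
    omega
  -- now compute coreMap
  have hx₀s : x₀ ∈ Finset.univ.filter
      (fun x => i ≤ x ∧ SameCarrel R i x ∧ IsCritical n R ν x) :=
    Finset.mem_filter.mpr ⟨Finset.mem_univ x₀, hx₀mem.1,
      (hSC i x₀ (le_refl _) hiq hx₀mem.1).mpr hx₀mem.2.1, hcrit⟩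
  have hsne : (Finset.univ.filter
      (fun x => i ≤ x ∧ SameCarrel R i x ∧ IsCritical n R ν x)).Nonempty := ⟨x₀, hx₀s⟩
  rw [coreMap]
  rw [dif_pos hsne]
  set x : Fin n := (Finset.univ.filter
      (fun x => i ≤ x ∧ SameCarrel R i x ∧ IsCritical n R ν x)).min' hsne with hx
  have hxmem : i ≤ x ∧ SameCarrel R i x ∧ IsCritical n R ν x :=
    (Finset.mem_filter.mp (Finset.min'_mem _ hsne)).2
  have hxx₀ : x ≤ x₀ := Finset.min'_le _ x₀ hx₀s
  have hxq : x.val < q := (hSC i x (le_refl _) hiq hxmem.1).mp hxmem.2.1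
  have hxeq : x = x₀ := by
    by_contra hne
    have hxlt : x < x₀ := lt_of_le_of_ne hxx₀ hne
    have hcx := hxmem.2.2 x₀ hxlt ((hSC x x₀ hxmem.1 hxq hxx₀).mpr hx₀mem.2.1)
    have h1 := hstep1 x hxmem.1 hxq
    have hii : i.val ≤ x.val := hxmem.1
    have hxx : x.val < x₀.val := hxlt
    have hx0e := hx₀mem.2.2
    omega
  rw [hxeq, hx₀mem.2.2]
  have : i.val ≤ x₀.val := hx₀mem.1
  omega

lemma auxSort (V : Finset ℕ) (i : ℕ) (h : i < V.card) :
    (V.sort (· ≤ ·)).getD i 0 ∈ V ∧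
    (V.filter (fun w => w < (V.sort (· ≤ ·)).getD i 0)).card = i := by
  set L := V.sort (· ≤ ·) with hL
  have hlen : L.length = V.card := Finset.length_sort _
  have hi : i < L.length := by omega
  have hget : L.getD i 0 = L.get ⟨i, hi⟩ := List.getD_eq_get _ _ ⟨i, hi⟩
  have hmemL : ∀ x, x ∈ L ↔ x ∈ V := fun x => Finset.mem_sort _
  have hslt : L.SortedLT := V.sortedLT_sort
  have hsm : StrictMono L.get := hslt.strictMono_get
  refine ⟨by rw [hget]; exact (hmemL _).1 (L.get_mem _), ?_⟩
  rw [hget]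
  have hset : V.filter (fun w => w < L.get ⟨i, hi⟩) = (L.take i).toFinset := by
    ext x
    simp only [Finset.mem_filter, List.mem_toFinset]
    constructor
    · rintro ⟨hxV, hxlt⟩
      obtain ⟨j, hjx⟩ := List.get_of_mem ((hmemL x).2 hxV)
      have hji : j.val < i := by
        by_contra hcon
        push_neg at hcon
        have : L.get ⟨i, hi⟩ ≤ L.get j := (hsm.le_iff_le).2 (by simpa [Fin.le_def] using hcon)
        omega
      have hjlen : j.val < (L.take i).length := by
        simp [List.length_take]; omega
      have : (L.take i)[j.val]'hjlen = x := by
        rw [List.getElem_take]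
        simpa [List.get_eq_getElem] using hjx
      exact this ▸ List.getElem_mem hjlen
    · intro hx
      obtain ⟨k, hk, hkx⟩ := List.getElem_of_mem hx
      have hki : k < i := by simp [List.length_take] at hk; omega
      have hkL : k < L.length := by omega
      have hLk : L[k]'hkL = x := by rw [← hkx, List.getElem_take]
      constructor
      · exact (hmemL x).1 (hLk ▸ List.getElem_mem hkL)
      · have : L.get ⟨k, hkL⟩ < L.get ⟨i, hi⟩ := hsm (by simp [Fin.lt_def]; omega)
        simpa [List.get_eq_getElem, hLk] using this
  rw [hset, List.toFinset_card_of_nodup ((List.take_sublist _ _).nodup (Finset.sort_nodup _ _))]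
  simp [List.length_take]; omega

/-- For an R-312-avoiding R-permutation π, the minimum-length 312-avoiding lift σ of π
satisfies Δ_R(Ψ(σ)) = Ψ_R(π). -/
theorem stmt19 (n : ℕ) (R : Finset ℕ) (hR : R ⊆ Finset.Ico 1 n)
    (π σ : Equiv.Perm (Fin n)) (hπ : IsRPerm n R π) (hav : RAvoids312 n R π)
    (hσ : Avoids312 n σ) (hproj : IsRProj n R σ π)
    (hmin : ∀ σ' : Equiv.Perm (Fin n),
      Avoids312 n σ' → IsRProj n R σ' π → invCount n σ ≤ invCount n σ') :
    coreMap n R (psiFull n σ) = rankTuple n R π := by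
  classical
  funext i
  set q : ℕ := carrelEnd n R i with hq
  have hmem0 : q ∈ insert n R ∧ i.val + 1 ≤ q := by
    have := Finset.min'_mem ((insert n R).filter (fun q => i.val + 1 ≤ q))
      ⟨n, Finset.mem_filter.mpr ⟨Finset.mem_insert_self n R, i.isLt⟩⟩
    rw [Finset.mem_filter] at this
    exact this
  have hqn : q ≤ n := by
    have : carrelEnd n R i ≤ n := Finset.min'_le _ n
      (Finset.mem_filter.mpr ⟨Finset.mem_insert_self n R, i.isLt⟩)
    omega
  set V : Finset ℕ := (Finset.univ.filter (fun j : Fin n => j.val < q)).image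
      (fun j => (σ j).val + 1) with hV
  have himg : (Finset.univ.filter (fun j : Fin n => j.val < q)).image
      (fun j => (π j).val + 1) = V := by
    have h1 : ∀ τ : Equiv.Perm (Fin n),
        (Finset.univ.filter (fun j : Fin n => j.val < q)).image (fun j => (τ j).val + 1)
        = ((Finset.univ.filter (fun j : Fin n => j.val < q)).image (fun j => τ j)).image
            (fun x : Fin n => x.val + 1) := by
      intro τ
      rw [Finset.image_image]
      rfl
    rcases Finset.mem_insert.mp hmem0.1 with hqn' | hqR
    · have hfu : (Finset.univ.filter (fun j : Fin n => j.val < q)) = Finset.univ := by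
        apply Finset.filter_true_of_mem
        intro j _
        rw [hqn']
        exact j.isLt
      rw [hV, h1 π, h1 σ, hfu, Finset.image_univ_equiv π, Finset.image_univ_equiv σ]
    · rw [hV, h1 π, h1 σ, (hproj.2 q hqR)]
  have hfinjσ : Function.Injective (fun j : Fin n => (σ j).val + 1) := by
    intro a b hab
    simp only at hab
    exact σ.injective (Fin.ext (by omega))
  have hVcard : V.card = q := by
    rw [hV, Finset.card_image_of_injective _ hfinjσ, auxCard n q hqn]
  have hiV : i.val < V.card := by omega
  obtain ⟨hr_mem, hr_count⟩ := auxSort V i.val hiV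
  have hrank : rankTuple n R π i = (V.sort (· ≤ ·)).getD i.val 0 := by
    rw [rankTuple, ← hq, himg]
  rw [hrank]
  exact keyLemma n R hR σ hσ i q hq V hV _ hr_mem hr_count
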